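/- Let μ ∈ H^{11}((0,1),ℝ) with μ′(0)=μ′(1)=μ⁽³⁾(0)=μ⁽³⁾(1)=0, and let φ_j(x) = √2 sin(jπx) for j ∈ ℕ*. Then for every fixed q ∈ ℕ*, as j → ∞: ⟨μφ_q, φ_j⟩ = (12q/(π⁶ j⁷)) ((−1)^{j+q} μ⁽⁵⁾(1) − μ⁽⁵⁾(0)) + o(1/j⁷), where ⟨f,g⟩ = ∫₀¹ f(x)g(x) dx. In particular, the sequence (j⁷⟨μφ_q, φ_j⟩)_j is bounded. -/

import Mathlib

open MeasureTheory intervalIntegral Filter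

section DipolarHelpers

open Real Topology

private lemma dip_ibp_sin (h : ℝ → ℝ) (hh : ContDiff ℝ 1 h) (c : ℝ) (hc : c ≠ 0) :
    ∫ x in (0:ℝ)..1, h x * Real.sin (c * x)
      = (h 0 - h 1 * Real.cos c) / c
        + (1 / c) * ∫ x in (0:ℝ)..1, deriv h x * Real.cos (c * x) := by
  have hu : ∀ x ∈ Set.uIcc (0:ℝ) 1, HasDerivAt h (deriv h x) x := fun x _ =>
    (hh.differentiable one_ne_zero x).hasDerivAt
  have hv : ∀ x ∈ Set.uIcc (0:ℝ) 1,
      HasDerivAt (fun y => -Real.cos (c * y) / c) (Real.sin (c * x)) x := by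
    intro x _
    have h1 : HasDerivAt (fun y => Real.cos (c * y)) (-Real.sin (c * x) * c) x := by
      simpa [Function.comp_def] using (Real.hasDerivAt_cos (c * x)).comp x ((hasDerivAt_id x).const_mul c)
    have := (h1.neg).div_const c
    simpa [neg_mul, neg_neg, mul_div_assoc, mul_div_cancel_right₀ _ hc] using this
  have hcderiv : Continuous (deriv h) := (contDiff_one_iff_deriv.mp hh).2
  have hu' : IntervalIntegrable (deriv h) volume 0 1 := hcderiv.intervalIntegrable _ _
  have hv' : IntervalIntegrable (fun x => Real.sin (c * x)) volume 0 1 :=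
    (Real.continuous_sin.comp (continuous_const.mul continuous_id)).intervalIntegrable _ _
  have key := intervalIntegral.integral_mul_deriv_eq_deriv_mul hu hv hu' hv'
  have h2 : (∫ x in (0:ℝ)..1, deriv h x * (-Real.cos (c * x) / c))
      = (-(1:ℝ) / c) * ∫ x in (0:ℝ)..1, deriv h x * Real.cos (c * x) := by
    rw [← intervalIntegral.integral_const_mul]
    apply intervalIntegral.integral_congr
    intro x _; ring
  rw [key, h2]
  rw [mul_zero, mul_one, Real.cos_zero]
  ring

private lemma dip_ibp_cos (h : ℝ → ℝ) (hh : ContDiff ℝ 1 h) (c : ℝ) (hc : c ≠ 0) :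
    ∫ x in (0:ℝ)..1, h x * Real.cos (c * x)
      = (h 1 * Real.sin c) / c
        - (1 / c) * ∫ x in (0:ℝ)..1, deriv h x * Real.sin (c * x) := by
  have hu : ∀ x ∈ Set.uIcc (0:ℝ) 1, HasDerivAt h (deriv h x) x := fun x _ =>
    (hh.differentiable one_ne_zero x).hasDerivAt
  have hv : ∀ x ∈ Set.uIcc (0:ℝ) 1,
      HasDerivAt (fun y => Real.sin (c * y) / c) (Real.cos (c * x)) x := by
    intro x _
    have h1 : HasDerivAt (fun y => Real.sin (c * y)) (Real.cos (c * x) * c) x := by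
      simpa [Function.comp_def] using (Real.hasDerivAt_sin (c * x)).comp x ((hasDerivAt_id x).const_mul c)
    have := h1.div_const c
    simpa [mul_div_assoc, mul_div_cancel_right₀ _ hc] using this
  have hcderiv : Continuous (deriv h) := (contDiff_one_iff_deriv.mp hh).2
  have hu' : IntervalIntegrable (deriv h) volume 0 1 := hcderiv.intervalIntegrable _ _
  have hv' : IntervalIntegrable (fun x => Real.cos (c * x)) volume 0 1 :=
    (Real.continuous_cos.comp (continuous_const.mul continuous_id)).intervalIntegrable _ _
  have key := intervalIntegral.integral_mul_deriv_eq_deriv_mul hu hv hu' hv'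
  have h2 : (∫ x in (0:ℝ)..1, deriv h x * (Real.sin (c * x) / c))
      = ((1:ℝ) / c) * ∫ x in (0:ℝ)..1, deriv h x * Real.sin (c * x) := by
    rw [← intervalIntegral.integral_const_mul]
    apply intervalIntegral.integral_congr
    intro x _; ring
  rw [key, h2]
  rw [mul_zero, mul_one, Real.sin_zero]
  ring

private lemma dip_ibp2 (h : ℝ → ℝ) (hh : ContDiff ℝ 2 h) (c : ℝ) (hc : c ≠ 0)
    (hs : Real.sin c = 0) :
    ∫ x in (0:ℝ)..1, h x * Real.cos (c * x)
      = -((deriv h 0 - deriv h 1 * Real.cos c) / c ^ 2)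
        - (1 / c ^ 2) * ∫ x in (0:ℝ)..1, deriv (deriv h) x * Real.cos (c * x) := by
  have hh1 : ContDiff ℝ 1 h := hh.of_le (by norm_num)
  have hh' : ContDiff ℝ 1 (deriv h) := by
    have := (contDiff_succ_iff_deriv (n := 1)).mp (by exact_mod_cast hh)
    exact this.2.2
  rw [dip_ibp_cos h hh1 c hc, dip_ibp_sin (deriv h) hh' c hc, hs]
  ring

private lemma dip_expand (μ : ℝ → ℝ) (hμ : ContDiff ℝ 11 μ)
    (hbc1 : deriv μ 0 = 0) (hbc2 : deriv μ 1 = 0)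
    (hbc3 : iteratedDeriv 3 μ 0 = 0) (hbc4 : iteratedDeriv 3 μ 1 = 0)
    (c : ℝ) (hc : c ≠ 0) (hs : Real.sin c = 0) :
    ∫ x in (0:ℝ)..1, μ x * Real.cos (c * x)
      = -((iteratedDeriv 5 μ 0 - iteratedDeriv 5 μ 1 * Real.cos c) / c ^ 6)
        + (iteratedDeriv 7 μ 0 - iteratedDeriv 7 μ 1 * Real.cos c) / c ^ 8
        + (1 / c ^ 8) * ∫ x in (0:ℝ)..1, iteratedDeriv 8 μ x * Real.cos (c * x) := by
  have hcd : ∀ k n : ℕ, k + n ≤ 11 → ContDiff ℝ k (iteratedDeriv n μ) := by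
    intro k n hkn
    rw [iteratedDeriv_eq_iterate]
    exact ContDiff.iterate_deriv' k n (hμ.of_le (by exact_mod_cast hkn))
  have hder : ∀ n : ℕ, deriv (iteratedDeriv n μ) = iteratedDeriv (n + 1) μ := fun n =>
    (iteratedDeriv_succ).symm
  have hd0 : deriv μ = iteratedDeriv 1 μ := (iteratedDeriv_one).symm
  have e0 := dip_ibp2 μ (hμ.of_le (by norm_num)) c hc hs
  have e2 := dip_ibp2 (iteratedDeriv 2 μ) (hcd 2 2 (by norm_num)) c hc hs
  have e4 := dip_ibp2 (iteratedDeriv 4 μ) (hcd 2 4 (by norm_num)) c hc hs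
  have e6 := dip_ibp2 (iteratedDeriv 6 μ) (hcd 2 6 (by norm_num)) c hc hs
  simp only [hd0, hder] at e0 e2 e4 e6
  norm_num at e0 e2 e4 e6
  rw [e0, e2, e4, e6, hbc1, hbc2, hbc3, hbc4]
  ring

private lemma dip_cos_sub (j q : ℕ) (hj : q + 1 ≤ j) :
    Real.cos (((j:ℝ) - q) * π) = (-1:ℝ)^(j+q) := by
  have hqj : q ≤ j := by omega
  have h1 : ((j:ℝ) - q) = ((j - q : ℕ) : ℝ) := by push_cast [Nat.cast_sub hqj]; ring
  rw [h1]
  have h2 : Real.cos (((j - q : ℕ) : ℝ) * π) = (-1:ℝ)^(j - q) := by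
    simpa using Real.cos_nat_mul_pi_sub 0 (j - q)
  rw [h2, show j + q = (j - q) + 2 * q by omega, pow_add, pow_mul]
  norm_num

private lemma dip_sin_sub (j q : ℕ) (hj : q + 1 ≤ j) :
    Real.sin (((j:ℝ) - q) * π) = 0 := by
  have hqj : q ≤ j := by omega
  have h1 : ((j:ℝ) - q) = ((j - q : ℕ) : ℝ) := by push_cast [Nat.cast_sub hqj]; ring
  rw [h1, Real.sin_nat_mul_pi]

private lemma dip_cos_add (j q : ℕ) :
    Real.cos (((j:ℝ) + q) * π) = (-1:ℝ)^(j+q) := by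
  have h1 : ((j:ℝ) + q) = ((j + q : ℕ) : ℝ) := by push_cast; ring
  rw [h1]
  simpa using Real.cos_nat_mul_pi_sub 0 (j + q)

private lemma dip_sin_add (j q : ℕ) :
    Real.sin (((j:ℝ) + q) * π) = 0 := by
  have h1 : ((j:ℝ) + q) = ((j + q : ℕ) : ℝ) := by push_cast; ring
  rw [h1, Real.sin_nat_mul_pi]

private lemma dip_pointwise (μ : ℝ → ℝ) (j q : ℕ) (y : ℝ) :
    μ y * (Real.sqrt 2 * Real.sin (q * π * y)) * (Real.sqrt 2 * Real.sin (j * π * y))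
      = μ y * Real.cos ((((j:ℝ) - q) * π) * y) - μ y * Real.cos ((((j:ℝ) + q) * π) * y) := by
  have h2 : Real.sqrt 2 * Real.sqrt 2 = 2 := Real.mul_self_sqrt (by norm_num)
  have hc := Real.cos_sub_cos ((((j:ℝ) - q) * π) * y) ((((j:ℝ) + q) * π) * y)
  rw [show ((((j:ℝ) - q) * π) * y + (((j:ℝ) + q) * π) * y) / 2 = (j:ℝ) * π * y by ring,
      show ((((j:ℝ) - q) * π) * y - (((j:ℝ) + q) * π) * y) / 2 = -((q:ℝ) * π * y) by ring,
      Real.sin_neg] at hc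
  linear_combination -(μ y) * hc + μ y * Real.sin ((q:ℝ) * π * y) * Real.sin ((j:ℝ) * π * y) * h2

private lemma dip_tendsto_G (q : ℕ) : Tendsto (fun j : ℕ =>
    (j:ℝ)^7 * (1/(((j:ℝ) - q)*π)^6 - 1/(((j:ℝ) + q)*π)^6) - 12*q/π^6) atTop (𝓝 0) := by
  set a : ℝ := (q:ℝ) with ha
  have ha0 : 0 ≤ a := Nat.cast_nonneg q
  have hπ : π ≠ 0 := Real.pi_ne_zero
  have hFGc : ContinuousAt (fun u : ℝ =>
      (12*a + 40*a^3*u^2 + 12*a^5*u^4)/((1 - a*u)^6 * (1 + a*u)^6 * π^6) - 12*a/π^6) 0 := by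
    apply ContinuousAt.sub _ continuousAt_const
    apply ContinuousAt.div (by fun_prop) (by fun_prop)
    norm_num [Real.pi_ne_zero]
  have h1 : Tendsto (fun j : ℕ =>
      (12*a + 40*a^3*(1/(j:ℝ))^2 + 12*a^5*(1/(j:ℝ))^4)
        /((1 - a*(1/(j:ℝ)))^6 * (1 + a*(1/(j:ℝ)))^6 * π^6) - 12*a/π^6) atTop (𝓝 0) := by
    have h0 : ((12*a + 40*a^3*(0:ℝ)^2 + 12*a^5*(0:ℝ)^4)
        /((1 - a*0)^6 * (1 + a*0)^6 * π^6) - 12*a/π^6) = 0 := by norm_num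
    have := hFGc.tendsto.comp tendsto_one_div_atTop_nhds_zero_nat
    rw [h0] at this
    exact this
  apply h1.congr'
  filter_upwards [eventually_ge_atTop (q + 1)] with j hj
  set x : ℝ := (j:ℝ) with hx
  have hxa : a + 1 ≤ x := by rw [hx, ha]; exact_mod_cast hj
  have hx0 : x ≠ 0 := by nlinarith
  have hxm : x - a ≠ 0 := by nlinarith
  have hxp : x + a ≠ 0 := by nlinarith
  have h1 : 1 - a*(1/x) = (x - a)/x := by field_simp
  have h2 : 1 + a*(1/x) = (x + a)/x := by field_simp
  rw [h1, h2, div_pow, div_pow]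
  rw [sub_left_inj]
  field_simp
  ring

private lemma dip_tendsto_t1 (q : ℕ) : Tendsto (fun j : ℕ =>
    (j:ℝ)^7 / (((j:ℝ) - q)*π)^8) atTop (𝓝 0) := by
  set a : ℝ := (q:ℝ) with ha
  have ha0 : 0 ≤ a := Nat.cast_nonneg q
  have hπ : π ≠ 0 := Real.pi_ne_zero
  have hFGc : ContinuousAt (fun u : ℝ => u/((1 - a*u)^8 * π^8)) 0 := by
    apply ContinuousAt.div (by fun_prop) (by fun_prop)
    norm_num [Real.pi_ne_zero]
  have h1 : Tendsto (fun j : ℕ =>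
      (1/(j:ℝ))/((1 - a*(1/(j:ℝ)))^8 * π^8)) atTop (𝓝 0) := by
    have h0 : ((0:ℝ)/((1 - a*0)^8 * π^8)) = 0 := by norm_num
    have := hFGc.tendsto.comp tendsto_one_div_atTop_nhds_zero_nat
    rw [h0] at this
    exact this
  apply h1.congr'
  filter_upwards [eventually_ge_atTop (q + 1)] with j hj
  set x : ℝ := (j:ℝ) with hx
  have hxa : a + 1 ≤ x := by rw [hx, ha]; exact_mod_cast hj
  have hx0 : x ≠ 0 := by nlinarith
  have hxm : x - a ≠ 0 := by nlinarith
  have h1 : 1 - a*(1/x) = (x - a)/x := by field_simp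
  rw [h1, div_pow]
  field_simp

private lemma dip_tendsto_t2 (q : ℕ) : Tendsto (fun j : ℕ =>
    (j:ℝ)^7 / (((j:ℝ) + q)*π)^8) atTop (𝓝 0) := by
  set a : ℝ := (q:ℝ) with ha
  have ha0 : 0 ≤ a := Nat.cast_nonneg q
  have hπ : π ≠ 0 := Real.pi_ne_zero
  have hFGc : ContinuousAt (fun u : ℝ => u/((1 + a*u)^8 * π^8)) 0 := by
    apply ContinuousAt.div (by fun_prop) (by fun_prop)
    norm_num [Real.pi_ne_zero]
  have h1 : Tendsto (fun j : ℕ =>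
      (1/(j:ℝ))/((1 + a*(1/(j:ℝ)))^8 * π^8)) atTop (𝓝 0) := by
    have h0 : ((0:ℝ)/((1 + a*0)^8 * π^8)) = 0 := by norm_num
    have := hFGc.tendsto.comp tendsto_one_div_atTop_nhds_zero_nat
    rw [h0] at this
    exact this
  apply h1.congr'
  filter_upwards [eventually_ge_atTop (q + 1)] with j hj
  set x : ℝ := (j:ℝ) with hx
  have hxa : a + 1 ≤ x := by rw [hx, ha]; exact_mod_cast hj
  have hx0 : x ≠ 0 := by nlinarith
  have hxp : x + a ≠ 0 := by nlinarith
  have h1 : 1 + a*(1/x) = (x + a)/x := by field_simp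
  rw [h1, div_pow]
  field_simp

end DipolarHelpers

theorem dipolar_coefficient_asymptotics
    (μ : ℝ → ℝ) (hμ : ContDiff ℝ 11 μ)
    (hbc1 : deriv μ 0 = 0) (hbc2 : deriv μ 1 = 0)
    (hbc3 : iteratedDeriv 3 μ 0 = 0) (hbc4 : iteratedDeriv 3 μ 1 = 0)
    (q : ℕ) (hq : 0 < q) :
    Filter.Tendsto (fun j : ℕ =>
        (j : ℝ) ^ 7 * (∫ x in (0:ℝ)..1,
            μ x * (Real.sqrt 2 * Real.sin (q * Real.pi * x))
              * (Real.sqrt 2 * Real.sin (j * Real.pi * x)))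
          - (12 * q / Real.pi ^ 6) *
              ((-1 : ℝ) ^ (j + q) * iteratedDeriv 5 μ 1 - iteratedDeriv 5 μ 0))
      Filter.atTop (nhds 0)
    ∧ ∃ M : ℝ, ∀ j : ℕ,
        |(j : ℝ) ^ 7 * ∫ x in (0:ℝ)..1,
            μ x * (Real.sqrt 2 * Real.sin (q * Real.pi * x))
              * (Real.sqrt 2 * Real.sin (j * Real.pi * x))| ≤ M := by
  have hπ : (0:ℝ) < Real.pi := Real.pi_pos
  have hπ0 : Real.pi ≠ 0 := Real.pi_ne_zero
  -- bound on the 8th derivative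
  obtain ⟨K, hK⟩ := (isCompact_Icc : IsCompact (Set.Icc (0:ℝ) 1)).exists_bound_of_continuousOn
    ((hμ.continuous_iteratedDeriv 8 (by norm_num)).continuousOn)
  have hK0 : 0 ≤ K := le_trans (norm_nonneg _) (hK 0 (by norm_num))
  have hR : ∀ c : ℝ, |∫ x in (0:ℝ)..1, iteratedDeriv 8 μ x * Real.cos (c*x)| ≤ K := by
    intro c
    have hb : ∀ x ∈ Set.uIoc (0:ℝ) 1, ‖iteratedDeriv 8 μ x * Real.cos (c*x)‖ ≤ K := by
      intro x hx
      rw [Set.uIoc_of_le (by norm_num : (0:ℝ) ≤ 1)] at hx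
      have hmem : x ∈ Set.Icc (0:ℝ) 1 := ⟨le_of_lt hx.1, hx.2⟩
      calc ‖iteratedDeriv 8 μ x * Real.cos (c*x)‖
          = ‖iteratedDeriv 8 μ x‖ * ‖Real.cos (c*x)‖ := norm_mul _ _
        _ ≤ K * 1 := mul_le_mul (hK x hmem)
            (by simpa using Real.abs_cos_le_one (c*x)) (norm_nonneg _) hK0
        _ = K := mul_one K
    have := intervalIntegral.norm_integral_le_of_norm_le_const hb
    simpa using this
  set d50 := iteratedDeriv 5 μ 0 with hd50
  set d51 := iteratedDeriv 5 μ 1 with hd51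
  set d70 := iteratedDeriv 7 μ 0 with hd70
  set d71 := iteratedDeriv 7 μ 1 with hd71
  set B5 : ℝ := |d50| + |d51| with hB5
  set B7 : ℝ := |d70| + |d71| + K with hB7
  -- the key pointwise bound
  have hbd : ∀ j : ℕ, q + 1 ≤ j →
      ‖(j : ℝ) ^ 7 * (∫ x in (0:ℝ)..1,
            μ x * (Real.sqrt 2 * Real.sin (q * Real.pi * x))
              * (Real.sqrt 2 * Real.sin (j * Real.pi * x)))
          - (12 * q / Real.pi ^ 6) * ((-1 : ℝ) ^ (j + q) * d51 - d50)‖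
        ≤ B5 * |(j:ℝ)^7 * (1/(((j:ℝ) - q)*Real.pi)^6 - 1/(((j:ℝ) + q)*Real.pi)^6)
              - 12*q/Real.pi^6|
          + B7 * ((j:ℝ)^7 / (((j:ℝ) - q)*Real.pi)^8 + (j:ℝ)^7 / (((j:ℝ) + q)*Real.pi)^8) := by
    intro j hj
    have hxa : (q:ℝ) + 1 ≤ (j:ℝ) := by exact_mod_cast hj
    have hq0 : (0:ℝ) ≤ (q:ℝ) := Nat.cast_nonneg q
    set c₁ : ℝ := ((j:ℝ) - q) * Real.pi with hc₁
    set c₂ : ℝ := ((j:ℝ) + q) * Real.pi with hc₂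
    have hc₁pos : 0 < c₁ := by rw [hc₁]; nlinarith
    have hc₂pos : 0 < c₂ := by rw [hc₂]; nlinarith
    have hc₁0 : c₁ ≠ 0 := ne_of_gt hc₁pos
    have hc₂0 : c₂ ≠ 0 := ne_of_gt hc₂pos
    have hcos1 : Real.cos c₁ = (-1:ℝ)^(j+q) := dip_cos_sub j q hj
    have hsin1 : Real.sin c₁ = 0 := dip_sin_sub j q hj
    have hcos2 : Real.cos c₂ = (-1:ℝ)^(j+q) := dip_cos_add j q
    have hsin2 : Real.sin c₂ = 0 := dip_sin_add j q
    have hint1 : IntervalIntegrable (fun y => μ y * Real.cos (c₁ * y)) volume 0 1 :=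
      (hμ.continuous.mul (Real.continuous_cos.comp
        (continuous_const.mul continuous_id))).intervalIntegrable _ _
    have hint2 : IntervalIntegrable (fun y => μ y * Real.cos (c₂ * y)) volume 0 1 :=
      (hμ.continuous.mul (Real.continuous_cos.comp
        (continuous_const.mul continuous_id))).intervalIntegrable _ _
    have hsplit : (∫ x in (0:ℝ)..1,
          μ x * (Real.sqrt 2 * Real.sin (q * Real.pi * x))
            * (Real.sqrt 2 * Real.sin (j * Real.pi * x)))
        = (∫ x in (0:ℝ)..1, μ x * Real.cos (c₁ * x))
          - (∫ x in (0:ℝ)..1, μ x * Real.cos (c₂ * x)) := by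
      rw [← intervalIntegral.integral_sub hint1 hint2]
      apply intervalIntegral.integral_congr
      intro y _
      exact dip_pointwise μ j q y
    have e₁ := dip_expand μ hμ hbc1 hbc2 hbc3 hbc4 c₁ hc₁0 hsin1
    have e₂ := dip_expand μ hμ hbc1 hbc2 hbc3 hbc4 c₂ hc₂0 hsin2
    rw [hcos1] at e₁
    rw [hcos2] at e₂
    rw [Real.norm_eq_abs, hsplit, e₁, e₂]
    have habs1 : |(-1:ℝ)^(j+q)| = 1 := by
      rw [abs_pow, abs_neg, abs_one, one_pow]
    have hb : |(-1:ℝ)^(j+q) * d51 - d50| ≤ B5 := by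
      refine (abs_sub _ _).trans ?_
      rw [abs_mul, habs1, one_mul, hB5]
      linarith
    have hr₁ : |d70 - d71 * (-1:ℝ)^(j+q)
        + ∫ x in (0:ℝ)..1, iteratedDeriv 8 μ x * Real.cos (c₁*x)| ≤ B7 := by
      refine (abs_add_le _ _).trans ?_
      have h1 : |d70 - d71 * (-1:ℝ)^(j+q)| ≤ |d70| + |d71| := by
        refine (abs_sub _ _).trans ?_
        rw [abs_mul, habs1, mul_one]
      rw [hB7]
      linarith [hR c₁]
    have hr₂ : |d70 - d71 * (-1:ℝ)^(j+q)
        + ∫ x in (0:ℝ)..1, iteratedDeriv 8 μ x * Real.cos (c₂*x)| ≤ B7 := by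
      refine (abs_add_le _ _).trans ?_
      have h1 : |d70 - d71 * (-1:ℝ)^(j+q)| ≤ |d70| + |d71| := by
        refine (abs_sub _ _).trans ?_
        rw [abs_mul, habs1, mul_one]
      rw [hB7]
      linarith [hR c₂]
    have ht₁ : (0:ℝ) ≤ (j:ℝ)^7 / c₁^8 := by positivity
    have ht₂ : (0:ℝ) ≤ (j:ℝ)^7 / c₂^8 := by positivity
    have hre : (j:ℝ)^7 * ((-((d50 - d51 * (-1:ℝ)^(j+q)) / c₁ ^ 6)
          + (d70 - d71 * (-1:ℝ)^(j+q)) / c₁ ^ 8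
          + (1 / c₁ ^ 8) * ∫ x in (0:ℝ)..1, iteratedDeriv 8 μ x * Real.cos (c₁*x))
        - (-((d50 - d51 * (-1:ℝ)^(j+q)) / c₂ ^ 6)
          + (d70 - d71 * (-1:ℝ)^(j+q)) / c₂ ^ 8
          + (1 / c₂ ^ 8) * ∫ x in (0:ℝ)..1, iteratedDeriv 8 μ x * Real.cos (c₂*x)))
        - (12 * q / Real.pi ^ 6) * ((-1 : ℝ) ^ (j + q) * d51 - d50)
      = ((-1:ℝ)^(j+q) * d51 - d50)
          * ((j:ℝ)^7 * (1/c₁^6 - 1/c₂^6) - 12*q/Real.pi^6)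
        + (d70 - d71 * (-1:ℝ)^(j+q)
            + ∫ x in (0:ℝ)..1, iteratedDeriv 8 μ x * Real.cos (c₁*x)) * ((j:ℝ)^7 / c₁^8)
        - (d70 - d71 * (-1:ℝ)^(j+q)
            + ∫ x in (0:ℝ)..1, iteratedDeriv 8 μ x * Real.cos (c₂*x)) * ((j:ℝ)^7 / c₂^8) := by
      ring
    rw [hre]
    have step1 : ∀ P Q R : ℝ, |P + Q - R| ≤ (|P| + |Q|) + |R| := fun P Q R =>
      (abs_sub _ _).trans (add_le_add_left (abs_add_le _ _) _)
    refine (step1 _ _ _).trans ?_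
    have hP : |((-1:ℝ)^(j+q) * d51 - d50)
        * ((j:ℝ)^7 * (1/c₁^6 - 1/c₂^6) - 12*q/Real.pi^6)|
        ≤ B5 * |(j:ℝ)^7 * (1/c₁^6 - 1/c₂^6) - 12*q/Real.pi^6| := by
      rw [abs_mul]
      exact mul_le_mul_of_nonneg_right hb (abs_nonneg _)
    have hQ : |(d70 - d71 * (-1:ℝ)^(j+q)
        + ∫ x in (0:ℝ)..1, iteratedDeriv 8 μ x * Real.cos (c₁*x)) * ((j:ℝ)^7 / c₁^8)|
        ≤ B7 * ((j:ℝ)^7 / c₁^8) := by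
      rw [abs_mul, abs_of_nonneg ht₁]
      exact mul_le_mul_of_nonneg_right hr₁ ht₁
    have hQ' : |(d70 - d71 * (-1:ℝ)^(j+q)
        + ∫ x in (0:ℝ)..1, iteratedDeriv 8 μ x * Real.cos (c₂*x)) * ((j:ℝ)^7 / c₂^8)|
        ≤ B7 * ((j:ℝ)^7 / c₂^8) := by
      rw [abs_mul, abs_of_nonneg ht₂]
      exact mul_le_mul_of_nonneg_right hr₂ ht₂
    linarith
  -- tendsto of the majorant
  have hψ : Tendsto (fun j : ℕ =>
      B5 * |(j:ℝ)^7 * (1/(((j:ℝ) - q)*Real.pi)^6 - 1/(((j:ℝ) + q)*Real.pi)^6)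
          - 12*q/Real.pi^6|
        + B7 * ((j:ℝ)^7 / (((j:ℝ) - q)*Real.pi)^8 + (j:ℝ)^7 / (((j:ℝ) + q)*Real.pi)^8))
      atTop (nhds 0) := by
    have := (((dip_tendsto_G q).abs).const_mul B5).add
      (((dip_tendsto_t1 q).add (dip_tendsto_t2 q)).const_mul B7)
    simpa using this
  have part1 : Filter.Tendsto (fun j : ℕ =>
      (j : ℝ) ^ 7 * (∫ x in (0:ℝ)..1,
          μ x * (Real.sqrt 2 * Real.sin (q * Real.pi * x))
            * (Real.sqrt 2 * Real.sin (j * Real.pi * x)))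
        - (12 * q / Real.pi ^ 6) * ((-1 : ℝ) ^ (j + q) * d51 - d50))
      Filter.atTop (nhds 0) := by
    apply squeeze_zero_norm' _ hψ
    filter_upwards [eventually_ge_atTop (q + 1)] with j hj
    exact hbd j hj
  refine ⟨part1, ?_⟩
  -- boundedness
  obtain ⟨N, hN⟩ := Metric.tendsto_atTop.mp part1 1 one_pos
  set f : ℕ → ℝ := fun j => (j : ℝ) ^ 7 * ∫ x in (0:ℝ)..1,
      μ x * (Real.sqrt 2 * Real.sin (q * Real.pi * x))
        * (Real.sqrt 2 * Real.sin (j * Real.pi * x)) with hf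
  have hT : ∀ j : ℕ, |(12 * (q:ℝ) / Real.pi ^ 6) * ((-1 : ℝ) ^ (j + q) * d51 - d50)|
      ≤ |12 * (q:ℝ) / Real.pi ^ 6| * (|d51| + |d50|) := by
    intro j
    rw [abs_mul]
    apply mul_le_mul_of_nonneg_left _ (abs_nonneg _)
    refine (abs_sub _ _).trans ?_
    rw [abs_mul, abs_pow, abs_neg, abs_one, one_pow, one_mul]
  set C0 : ℝ := 1 + |12 * (q:ℝ) / Real.pi ^ 6| * (|d51| + |d50|) with hC0
  have hC0nonneg : 0 ≤ C0 := by positivity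
  refine ⟨C0 + ∑ i ∈ Finset.range N, |f i|, ?_⟩
  have hsumnonneg : 0 ≤ ∑ i ∈ Finset.range N, |f i| :=
    Finset.sum_nonneg fun i _ => abs_nonneg _
  intro j
  by_cases hj : N ≤ j
  · have h1 := hN j hj
    rw [Real.dist_eq, sub_zero] at h1
    have h2 : |f j| ≤ |f j - (12 * q / Real.pi ^ 6) * ((-1 : ℝ) ^ (j + q) * d51 - d50)|
        + |(12 * q / Real.pi ^ 6) * ((-1 : ℝ) ^ (j + q) * d51 - d50)| := by
      have := abs_add_le (f j - (12 * q / Real.pi ^ 6) * ((-1 : ℝ) ^ (j + q) * d51 - d50))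
        ((12 * q / Real.pi ^ 6) * ((-1 : ℝ) ^ (j + q) * d51 - d50))
      simpa using this
    have h3 := hT j
    rw [hC0]
    linarith [h1, h2, h3]
  · push_neg at hj
    have h4 : |f j| ≤ ∑ i ∈ Finset.range N, |f i| :=
      Finset.single_le_sum (f := fun i => |f i|) (fun i _ => abs_nonneg _)
        (Finset.mem_range.mpr hj)
    linarith
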